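/- Let I ⊆ ℝ be a nonempty open interval and f : I → ℝ. If f is t-convex for some t ∈ (0,1), i.e., f(tx+(1−t)y) ≤ t f(x)+(1−t) f(y) for all x,y ∈ I, then f is Jensen convex on I. -/
import Mathlib


theorem stmt_3 (I : Set ℝ) (hne : I.Nonempty) (hop : IsOpen I) (hconv : Convex ℝ I)
    (f : ℝ → ℝ) (t : ℝ) (ht0 : 0 < t) (ht1 : t < 1)
    (htconv : ∀ x ∈ I, ∀ y ∈ I, f (t * x + (1 - t) * y) ≤ t * f x + (1 - t) * f y) :
    ∀ u ∈ I, ∀ v ∈ I, f ((u + v) / 2) ≤ (f u + f v) / 2 := by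
  intro u hu v hv
  set m : ℝ := (u + v) / 2 with hm_def
  have hm : m ∈ I := by
    have h := hconv hu hv (by norm_num : (0:ℝ) ≤ 1/2) (by norm_num : (0:ℝ) ≤ 1/2)
      (by norm_num : (1:ℝ)/2 + 1/2 = 1)
    have e : ((1:ℝ)/2) • u + ((1:ℝ)/2) • v = m := by
      simp only [smul_eq_mul, hm_def]; ring
    rwa [e] at h
  -- membership of intermediate points
  have ht0' : (0:ℝ) ≤ t := le_of_lt ht0
  have ht1' : (0:ℝ) ≤ 1 - t := by linarith
  have hA : t * m + (1 - t) * u ∈ I := by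
    have h := hconv hm hu ht0' ht1' (by ring : t + (1 - t) = 1)
    simpa [smul_eq_mul] using h
  have hB : t * v + (1 - t) * m ∈ I := by
    have h := hconv hv hm ht0' ht1' (by ring : t + (1 - t) = 1)
    simpa [smul_eq_mul] using h
  have h1 := htconv m hm u hu
  have h2 := htconv v hv m hm
  have h3 := htconv _ hA _ hB
  have key : t * (t * m + (1 - t) * u) + (1 - t) * (t * v + (1 - t) * m) = m := by
    simp only [hm_def]; ring
  rw [key] at h3
  nlinarith [mul_pos ht0 (by linarith : (0:ℝ) < 1 - t), h1, h2, h3,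
    mul_le_mul_of_nonneg_left h1 ht0', mul_le_mul_of_nonneg_left h2 ht1']
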